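/- The comb tree C_{n,k} is increasing, has depth vector (n−1, n−1, ..., n−1, n) (with k−1 entries equal to n−1 followed by one entry n), and has the lexicographically largest depth vector among all trees in 𝕋_{n,k}. -/

import Mathlib

/-- Plane rooted `n`-ary trees: every internal node has exactly `n` ordered children. -/
inductive NTree (n : ℕ) : Type
  | leaf : NTree n
  | node : (Fin n → NTree n) → NTree n

namespace NTree

/-- The number of internal nodes; `T ∈ 𝕋_{n,k}` means `internals T = k`. -/
def internals {n : ℕ} : NTree n → ℕ
  | leaf => 0
  | node c => 1 + ∑ i, internals (c i)

/-- Boolean test for being a leaf. -/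
def isLeafB {n : ℕ} : NTree n → Bool
  | leaf => true
  | node _ => false

/-- `μ_T(a)`: the number of children of an internal node that are leaves. -/
def muNode {n : ℕ} (c : Fin n → NTree n) : ℕ :=
  (Finset.univ.filter (fun i => isLeafB (c i) = true)).card

/-- A tree is increasing if whenever an internal node `a` has an internal-node child `b`,
`μ(a) ≤ μ(b)`. -/
def Increasing {n : ℕ} : NTree n → Prop
  | leaf => True
  | node c => (∀ i, Increasing (c i)) ∧
      ∀ i (c' : Fin n → NTree n), c i = node c' → muNode c ≤ muNode c'

/-- The number of leaves of a tree at depth `d`. -/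
def leavesAtDepth {n : ℕ} : NTree n → ℕ → ℕ
  | leaf => fun d => if d = 0 then 1 else 0
  | node c => fun d =>
      match d with
      | 0 => 0
      | d + 1 => ∑ i, leavesAtDepth (c i) d

/-- Strict lexicographic order on depth vectors (as functions `ℕ → ℕ`, padded with 0). -/
def LexLt (u v : ℕ → ℕ) : Prop :=
  ∃ m, (∀ i, i < m → u i = v i) ∧ u m < v m

/-- Weak lexicographic order. -/
def LexLe (u v : ℕ → ℕ) : Prop := u = v ∨ LexLt u v

/-- The comb tree `C_{n,k}`: for `k = 1` a root with `n` leaf children; for `k > 1` the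
leftmost child of the root carries `C_{n,k-1}` and the other children are leaves. -/
def comb (n : ℕ) : ℕ → NTree n
  | 0 => leaf
  | k + 1 => node (fun i => if i.val = 0 then comb n k else leaf)

end NTree

namespace NTree

lemma internals_eq_zero_iff {n : ℕ} (T : NTree n) : internals T = 0 ↔ T = leaf := by
  cases T with
  | leaf => simp [internals]
  | node c => simp [internals]

lemma leavesAtDepth_zero {n : ℕ} (T : NTree n) :
    leavesAtDepth T 0 = if internals T = 0 then 1 else 0 := by
  cases T with
  | leaf => simp [internals, leavesAtDepth]
  | node c => simp [internals, leavesAtDepth]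

lemma sum_one_special {n : ℕ} (j : Fin n) (f : Fin n → ℕ) (a b : ℕ)
    (hj : f j = a) (ho : ∀ i, i ≠ j → f i = b) :
    ∑ i, f i = a + (n - 1) * b := by
  rw [← Finset.add_sum_erase _ f (Finset.mem_univ j), hj]
  congr 1
  rw [Finset.sum_congr rfl (fun i hi => ho i (Finset.ne_of_mem_erase hi)),
    Finset.sum_const, Finset.card_erase_of_mem (Finset.mem_univ j), Finset.card_univ,
    Fintype.card_fin, smul_eq_mul]

lemma card_val_ne_zero (n : ℕ) :
    (Finset.univ.filter (fun i : Fin n => i.val ≠ 0)).card = n - 1 := by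
  cases n with
  | zero => simp
  | succ m =>
    have : (Finset.univ.filter (fun i : Fin (m+1) => i.val ≠ 0)) = Finset.univ.erase 0 := by
      ext i
      simp only [Finset.mem_filter, Finset.mem_univ, true_and, Finset.mem_erase, and_true, ne_eq,
        Fin.ext_iff, Fin.val_zero]
    rw [this, Finset.card_erase_of_mem (Finset.mem_univ 0), Finset.card_univ, Fintype.card_fin]

lemma leavesAtDepth_node_succ {n : ℕ} (c : Fin n → NTree n) (d : ℕ) :
    leavesAtDepth (node c) (d+1) = ∑ i, leavesAtDepth (c i) d := by simp [leavesAtDepth]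

lemma leavesAtDepth_node_zero {n : ℕ} (c : Fin n → NTree n) :
    leavesAtDepth (node c) 0 = 0 := by simp [leavesAtDepth]

lemma comb_leaves (n : ℕ) : ∀ k, 1 ≤ k → ∀ i : ℕ,
    leavesAtDepth (comb n k) i = if 1 ≤ i ∧ i < k then n - 1 else if i = k then n else 0 := by
  intro k
  induction k with
  | zero => omega
  | succ k ih =>
    intro _ i
    cases k with
    | zero =>
      cases i with
      | zero => simp [comb, leavesAtDepth]
      | succ d =>
        rw [show comb n (0+1) = node (fun j : Fin n => if (j : ℕ) = 0 then comb n 0 else leaf)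
          from rfl, leavesAtDepth_node_succ]
        have h1 : ∀ j : Fin n, (if (j : ℕ) = 0 then comb n 0 else leaf) = leaf := by
          intro j; split <;> rfl
        simp only [h1, leavesAtDepth]
        rw [Finset.sum_const, Finset.card_univ, Fintype.card_fin, smul_eq_mul]
        rcases Nat.eq_zero_or_pos d with h | h <;> simp [h] <;> omega
    | succ m =>
      have hk1 : 1 ≤ m + 1 := by omega
      cases i with
      | zero => simp [comb, leavesAtDepth]
      | succ d =>
        rw [show comb n (m+1+1) = node (fun j : Fin n => if (j : ℕ) = 0 then comb n (m+1) else leaf)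
          from rfl, leavesAtDepth_node_succ]
        rcases Nat.eq_zero_or_pos n with hn | hn
        · subst hn
          simp only [Finset.univ_eq_empty, Finset.sum_empty]
          split_ifs <;> omega
        · have hsum := sum_one_special (n := n) ⟨0, hn⟩
            (fun j => leavesAtDepth (if (j : ℕ) = 0 then comb n (m+1) else leaf) d)
            (leavesAtDepth (comb n (m+1)) d) (if d = 0 then 1 else 0)
            (by simp) (by
              intro i hi
              have : (i : ℕ) ≠ 0 := fun h => hi (Fin.ext h)
              simp [this, leavesAtDepth])
          rw [hsum, ih hk1 d]
          split_ifs <;> omega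

lemma comb_isNode {n : ℕ} {k : ℕ} (hk : 1 ≤ k) :
    ∃ c, comb n k = node c := by
  cases k with
  | zero => omega
  | succ m => exact ⟨_, rfl⟩

lemma muNode_combChildren_le {n : ℕ} (k : ℕ) :
    n - 1 ≤ muNode (fun i : Fin n => if (i : ℕ) = 0 then comb n k else leaf) := by
  rw [muNode, ← card_val_ne_zero n]
  apply Finset.card_le_card
  intro i hi
  simp only [Finset.mem_filter, Finset.mem_univ, true_and] at *
  simp [hi, isLeafB]

lemma muNode_combChildren_eq {n : ℕ} {k : ℕ} (hk : 1 ≤ k) :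
    muNode (fun i : Fin n => if (i : ℕ) = 0 then comb n k else leaf) = n - 1 := by
  obtain ⟨c, hc⟩ := comb_isNode (n := n) hk
  rw [muNode, ← card_val_ne_zero n]
  congr 1
  ext i
  simp only [Finset.mem_filter, Finset.mem_univ, true_and]
  constructor
  · intro h hi0
    rw [if_pos hi0, hc] at h
    simp [isLeafB] at h
  · intro h
    rw [if_neg h]
    rfl

lemma comb_increasing (n : ℕ) : ∀ k, Increasing (comb n k) := by
  intro k
  induction k with
  | zero => exact trivial
  | succ k ih =>
    refine ⟨?_, ?_⟩
    · intro i
      by_cases h : (i : ℕ) = 0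
      · simpa [h] using ih
      · simp only [h, if_neg]
        exact trivial
    · intro i c' hc
      by_cases h : (i : ℕ) = 0
      · replace hc : comb n k = node c' := by simpa [h] using hc
        have hk1 : 1 ≤ k := by
          cases k with
          | zero => exact absurd hc (by simp [comb])
          | succ m => omega
        rw [muNode_combChildren_eq hk1]
        cases k with
        | zero => omega
        | succ m =>
          have hc' : c' = fun i : Fin n => if (i : ℕ) = 0 then comb n m else leaf := by
            injection hc.symm
          rw [hc']
          exact muNode_combChildren_le m
      · replace hc : (leaf : NTree n) = node c' := by simpa [h] using hc
        exact absurd hc (by simp)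

lemma lexle_shift {u v u' v' : ℕ → ℕ} (e : ℕ → ℕ)
    (h0u : u' 0 = 0) (h0v : v' 0 = 0)
    (hu : ∀ i, u' (i+1) = u i + e i) (hv : ∀ i, v' (i+1) = v i + e i)
    (h : LexLe u v) : LexLe u' v' := by
  rcases h with h | ⟨m, hlt, hm⟩
  · left
    funext i
    cases i with
    | zero => rw [h0u, h0v]
    | succ j => rw [hu, hv, h]
  · right
    refine ⟨m + 1, ?_, ?_⟩
    · intro i hi
      cases i with
      | zero => rw [h0u, h0v]
      | succ j => rw [hu, hv, hlt j (by omega)]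
    · rw [hu, hv]
      exact Nat.add_lt_add_right hm _

lemma lexle_max (n : ℕ) : ∀ T : NTree n, 1 ≤ internals T →
    LexLe (leavesAtDepth T) (leavesAtDepth (comb n (internals T))) := by
  intro T
  induction T with
  | leaf => simp [internals]
  | node c ih =>
    intro _
    have hint : internals (node c) = 1 + ∑ i, internals (c i) := rfl
    set s := ∑ i, internals (c i) with hs
    rcases Nat.eq_zero_or_pos s with hs0 | hs1
    · -- all children are leaves; equal to comb n 1
      have hleaf : ∀ i, c i = leaf := by
        intro i
        rw [← internals_eq_zero_iff]
        have := Finset.sum_eq_zero_iff.mp (hs ▸ hs0) i (Finset.mem_univ i)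
        exact this
      left
      funext d
      rw [hint, hs0]
      cases d with
      | zero =>
        rw [leavesAtDepth_node_zero,
          show comb n (1+0) = node (fun j : Fin n => if (j : ℕ) = 0 then comb n 0 else leaf)
            from rfl, leavesAtDepth_node_zero]
      | succ d =>
        rw [leavesAtDepth_node_succ,
          show comb n (1+0) = node (fun j : Fin n => if (j : ℕ) = 0 then comb n 0 else leaf)
            from rfl, leavesAtDepth_node_succ]
        apply Finset.sum_congr rfl
        intro i _
        rw [hleaf i]
        split <;> rfl
    · -- at least one internal child
      set S := Finset.univ.filter (fun i : Fin n => internals (c i) ≠ 0) with hS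
      have hScard_le : S.card ≤ n := le_trans (Finset.card_filter_le _ _)
        (by rw [Finset.card_univ, Fintype.card_fin])
      have hex : ∃ i, internals (c i) ≠ 0 := by
        by_contra h
        push_neg at h
        have : s = 0 := by rw [hs]; exact Finset.sum_eq_zero (fun i _ => h i)
        omega
      have hS1 : 1 ≤ S.card := Finset.card_pos.mpr
        ⟨hex.choose, Finset.mem_filter.mpr ⟨Finset.mem_univ _, hex.choose_spec⟩⟩
      -- value at depth 1
      have hd1 : leavesAtDepth (node c) 1 = n - S.card := by
        rw [show (1:ℕ) = 0 + 1 from rfl, leavesAtDepth_node_succ]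
        have : ∀ i : Fin n, leavesAtDepth (c i) 0 = if internals (c i) = 0 then 1 else 0 :=
          fun i => leavesAtDepth_zero (c i)
        rw [Finset.sum_congr rfl (fun i _ => this i), Finset.sum_ite, Finset.sum_const,
          Finset.sum_const, smul_eq_mul, smul_eq_mul, mul_one, mul_zero, add_zero]
        rw [show Finset.univ.filter (fun i : Fin n => internals (c i) = 0)
            = Finset.univ \ S by
          rw [hS]
          ext i
          simp [Finset.mem_sdiff]]
        rw [Finset.card_sdiff_of_subset (Finset.subset_univ S), Finset.card_univ, Fintype.card_fin]
      have hcomb0 : leavesAtDepth (comb n (1 + s)) 0 = 0 := by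
        obtain ⟨cc, hcc⟩ := comb_isNode (n := n) (k := 1 + s) (by omega)
        rw [hcc, leavesAtDepth_node_zero]
      have hcomb1 : leavesAtDepth (comb n (1 + s)) 1 = n - 1 := by
        rw [comb_leaves n (1+s) (by omega) 1]
        have : (1 ≤ 1 ∧ 1 < 1 + s) := ⟨le_refl 1, by omega⟩
        rw [if_pos this]
      rcases Nat.lt_or_ge S.card 2 with hc2 | hc2
      · -- exactly one internal child j
        have hcard1 : S.card = 1 := by omega
        obtain ⟨j, hj⟩ := Finset.card_eq_one.mp hcard1
        have hjmem : j ∈ S := by rw [hj]; exact Finset.mem_singleton_self j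
        have hjne : internals (c j) ≠ 0 := (Finset.mem_filter.mp hjmem).2
        have hother : ∀ i, i ≠ j → c i = leaf := by
          intro i hij
          rw [← internals_eq_zero_iff]
          by_contra hne
          have : i ∈ S := Finset.mem_filter.mpr ⟨Finset.mem_univ i, hne⟩
          rw [hj, Finset.mem_singleton] at this
          exact hij this
        have hsn : internals (c j) = s := by
          rw [hs]
          rw [sum_one_special j (fun i => internals (c i)) (internals (c j)) 0 rfl
            (fun i hij => by show internals (c i) = 0; rw [hother i hij]; simp [internals])]
          omega
        have hn1 : 1 ≤ n := by
          rcases Nat.eq_zero_or_pos n with h | h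
          · exact absurd (h ▸ j).isLt (by omega)
          · exact h
        -- recursions
        have hu : ∀ d, leavesAtDepth (node c) (d+1)
            = leavesAtDepth (c j) d + (n - 1) * (if d = 0 then 1 else 0) := by
          intro d
          rw [leavesAtDepth_node_succ]
          exact sum_one_special j _ _ _ rfl
            (fun i hij => by rw [hother i hij]; rfl)
        have hv : ∀ d, leavesAtDepth (comb n (1 + s)) (d+1)
            = leavesAtDepth (comb n s) d + (n - 1) * (if d = 0 then 1 else 0) := by
          intro d
          rw [show (1 + s) = s + 1 by omega,
            show comb n (s+1) = node (fun i : Fin n => if (i : ℕ) = 0 then comb n s else leaf)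
              from rfl, leavesAtDepth_node_succ]
          exact sum_one_special ⟨0, hn1⟩ _ _ _ (by simp)
            (fun i hij => by
              have : (i : ℕ) ≠ 0 := fun h => hij (Fin.ext h)
              simp [this, leavesAtDepth])
        rw [hint]
        refine lexle_shift (fun d => (n - 1) * (if d = 0 then 1 else 0))
          (leavesAtDepth_node_zero c) hcomb0 hu hv ?_
        rw [← hsn]
        exact ih j (by omega)
      · -- at least two internal children: strictly smaller at depth 1
        right
        rw [hint]
        refine ⟨1, ?_, ?_⟩
        · intro i hi
          interval_cases i
          rw [hcomb0, leavesAtDepth_node_zero]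
        · rw [hd1, hcomb1]
          omega

end NTree

/-- the comb tree `C_{n,k}` (for `k ≥ 1`) is increasing, its depth vector is
`(n−1, n−1, …, n−1, n)` (entries `n−1` at depths `1, …, k−1` and `n` at depth `k`), and
it has the lexicographically largest depth vector among all trees in `𝕋_{n,k}`. -/
theorem stmt17 (n k : ℕ) (hk : 1 ≤ k) :
    NTree.Increasing (NTree.comb n k) ∧
    (∀ i, NTree.leavesAtDepth (NTree.comb n k) i =
      if 1 ≤ i ∧ i < k then n - 1 else if i = k then n else 0) ∧
    (∀ T : NTree n, T.internals = k →
      NTree.LexLe (NTree.leavesAtDepth T) (NTree.leavesAtDepth (NTree.comb n k))) := by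
  refine ⟨NTree.comb_increasing n k, NTree.comb_leaves n k hk, ?_⟩
  intro T hT
  have h := NTree.lexle_max n T (by omega)
  rwa [hT] at h
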